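/- Replay protection: let h : Tx → B be injective, and let (u, t) be a valid ledger trace (u : ℕ → Set (OutputRef × O), t : ℕ → Tx) whose initial state u 0 is well-founded. Then for all indices i < j, t i ≠ t j. -/

import Mathlib

/-- Output references spent by a transaction: keys of its inputs. -/
def getORefs {B O Tx : Type*} (inputs : Tx → Set ((B × ℕ) × O)) (t : Tx) :
    Set (B × ℕ) :=
  {r | ∃ o, (r, o) ∈ inputs t}

/-- UTxO entries created by a transaction: the `i`-th output of `t` keyed by `(h t, i)`. -/
def mkOuts {B O Tx : Type*} (outputs : Tx → List O) (hsh : Tx → B) (t : Tx) :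
    Set ((B × ℕ) × O) :=
  {p | ∃ i : ℕ, ∃ o, (outputs t)[i]? = some o ∧ p = ((hsh t, i), o)}

/-- A UTxO set is well-founded if the hash part of each of its keys comes from a
transaction with empty inputs. -/
def WellFoundedUTxO {B O Tx : Type*} (inputs : Tx → Set ((B × ℕ) × O)) (hsh : Tx → B)
    (u₀ : Set ((B × ℕ) × O)) : Prop :=
  ∀ b n o, ((b, n), o) ∈ u₀ → ∃ t₀ : Tx, hsh t₀ = b ∧ inputs t₀ = ∅

/-- The valid-trace conditions at step `k`: nonempty inputs, inputs present in the
current state, and the UTxO update rule. -/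
def ValidStep {B O Tx : Type*} (inputs : Tx → Set ((B × ℕ) × O))
    (outputs : Tx → List O) (hsh : Tx → B)
    (u : ℕ → Set ((B × ℕ) × O)) (t : ℕ → Tx) (k : ℕ) : Prop :=
  inputs (t k) ≠ ∅ ∧ inputs (t k) ⊆ u k ∧
    u (k + 1) = {p | p ∈ u k ∧ p.1 ∉ getORefs inputs (t k)} ∪ mkOuts outputs hsh (t k)

/-- A valid ledger trace: the valid-trace conditions hold at every step. -/
def ValidLedgerTrace {B O Tx : Type*} (inputs : Tx → Set ((B × ℕ) × O))
    (outputs : Tx → List O) (hsh : Tx → B)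
    (u : ℕ → Set ((B × ℕ) × O)) (t : ℕ → Tx) : Prop :=
  ∀ k, ValidStep inputs outputs hsh u t k

/-- Provenance: every key in `u k` comes either from an empty-inputs transaction
(well-foundedness of `u 0`) or from some earlier transaction of the trace. -/
lemma utxo_provenance {B O Tx : Type*}
    (inputs : Tx → Set ((B × ℕ) × O)) (outputs : Tx → List O) (hsh : Tx → B)
    (u : ℕ → Set ((B × ℕ) × O)) (t : ℕ → Tx)
    (htrace : ValidLedgerTrace inputs outputs hsh u t)
    (hwf : WellFoundedUTxO inputs hsh (u 0)) :
    ∀ k b n o, ((b, n), o) ∈ u k →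
      (∃ t₀ : Tx, hsh t₀ = b ∧ inputs t₀ = ∅) ∨ ∃ m < k, hsh (t m) = b := by
  intro k
  induction k with
  | zero => intro b n o hm; exact Or.inl (hwf b n o hm)
  | succ k ih =>
    intro b n o hm
    rw [(htrace k).2.2] at hm
    rcases hm with ⟨hm, _⟩ | ⟨i, o', _, heq⟩
    · rcases ih b n o hm with h | ⟨m, hmk, hh⟩
      · exact Or.inl h
      · exact Or.inr ⟨m, Nat.lt_succ_of_lt hmk, hh⟩
    · exact Or.inr ⟨k, Nat.lt_succ_self k, (congrArg (fun p => p.1.1) heq).symm⟩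

/-- Replay protection: along a valid ledger trace starting from a well-founded
initial state, no transaction can occur twice. -/
theorem replay_protection {B O Tx : Type*}
    (inputs : Tx → Set ((B × ℕ) × O)) (outputs : Tx → List O) (hsh : Tx → B)
    (hinj : Function.Injective hsh)
    (u : ℕ → Set ((B × ℕ) × O)) (t : ℕ → Tx)
    (htrace : ValidLedgerTrace inputs outputs hsh u t)
    (hwf : WellFoundedUTxO inputs hsh (u 0)) :
    ∀ i j : ℕ, i < j → t i ≠ t j := by
  intro i j
  induction j using Nat.strong_induction_on generalizing i with
  | _ j IH =>
  intro hij heq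
  -- pick an input of `t i`
  obtain ⟨⟨⟨b, n⟩, o⟩, hmem⟩ := Set.nonempty_iff_ne_empty.mpr (htrace i).1
  have hui : ((b, n), o) ∈ u i := (htrace i).2.1 hmem
  -- the hash `b` cannot be the hash of any `t k` with `i ≤ k < j`
  have hb : ∀ k, k < j → i ≤ k → b ≠ hsh (t k) := by
    intro k hkj hik hbeq
    rcases utxo_provenance inputs outputs hsh u t htrace hwf i b n o hui with
      ⟨t₀, ht₀, hemp⟩ | ⟨m, hmi, hhm⟩
    · exact (htrace k).1 (hinj (ht₀.trans hbeq) ▸ hemp)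
    · exact IH k hkj m (lt_of_lt_of_le hmi hik) (hinj (hhm.trans hbeq))
  -- the reference `(b, n)` is absent from `u k` for all `i < k ≤ j`
  have key : ∀ k, i + 1 ≤ k → k ≤ j → ∀ o', ((b, n), o') ∉ u k := by
    intro k hk
    induction k, hk using Nat.le_induction with
    | base =>
      intro hle o' hm
      rw [(htrace i).2.2] at hm
      rcases hm with ⟨_, hnot⟩ | ⟨idx, o'', _, heq'⟩
      · exact hnot ⟨o, hmem⟩
      · exact hb i (lt_of_lt_of_le (Nat.lt_succ_self i) hle) le_rfl
          (congrArg (fun p => p.1.1) heq')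
    | succ k hk ihk =>
      intro hle o' hm
      rw [(htrace k).2.2] at hm
      rcases hm with ⟨hm, _⟩ | ⟨idx, o'', _, heq'⟩
      · exact ihk (le_of_lt hle) o' hm
      · exact hb k hle (le_of_lt hk) (congrArg (fun p => p.1.1) heq')
  -- but `t j = t i` spends `(b, n)`, which must be in `u j`
  have : ((b, n), o) ∈ u j := (htrace j).2.1 (heq ▸ hmem)
  exact key j hij le_rfl o this
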